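/- Let v_c, v > 0, k = v_c/v, θ_m = Arcsin(1/√(3 + k²)), and define F⁺(θ) = θ + Arcsin(k·sin θ/√(1 - 3 sin²θ)) on (-θ_m, θ_m). Then F⁺ is strictly monotone increasing on (-θ_m, θ_m). -/
import Mathlib

lemma phi_mono_aux {s t : ℝ} (hs : 3 * s ^ 2 < 1) (ht : 3 * t ^ 2 < 1) (hst : s ≤ t) :
    s / Real.sqrt (1 - 3 * s ^ 2) ≤ t / Real.sqrt (1 - 3 * t ^ 2) := by
  have hAs : (0:ℝ) < 1 - 3 * s ^ 2 := by linarith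
  have hAt : (0:ℝ) < 1 - 3 * t ^ 2 := by linarith
  have hsq_s : Real.sqrt (1 - 3 * s ^ 2) > 0 := Real.sqrt_pos.2 hAs
  have hsq_t : Real.sqrt (1 - 3 * t ^ 2) > 0 := Real.sqrt_pos.2 hAt
  rw [div_le_div_iff₀ hsq_s hsq_t]
  rcases le_or_gt 0 s with hs0 | hs0
  · have ht0 : 0 ≤ t := hs0.trans hst
    have hsq : s ^ 2 ≤ t ^ 2 := by nlinarith
    calc s * Real.sqrt (1 - 3 * t ^ 2) ≤ t * Real.sqrt (1 - 3 * t ^ 2) :=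
          mul_le_mul_of_nonneg_right hst (Real.sqrt_nonneg _)
      _ ≤ t * Real.sqrt (1 - 3 * s ^ 2) :=
          mul_le_mul_of_nonneg_left (Real.sqrt_le_sqrt (by linarith)) ht0
  · rcases le_or_gt t 0 with ht0 | ht0
    · have hsq : t ^ 2 ≤ s ^ 2 := by nlinarith
      calc s * Real.sqrt (1 - 3 * t ^ 2) ≤ s * Real.sqrt (1 - 3 * s ^ 2) := by
            apply mul_le_mul_of_nonpos_left (Real.sqrt_le_sqrt (by linarith)) hs0.le
        _ ≤ t * Real.sqrt (1 - 3 * s ^ 2) :=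
            mul_le_mul_of_nonneg_right hst (Real.sqrt_nonneg _)
    · calc s * Real.sqrt (1 - 3 * t ^ 2) ≤ 0 :=
            mul_nonpos_of_nonpos_of_nonneg hs0.le (Real.sqrt_nonneg _)
        _ ≤ t * Real.sqrt (1 - 3 * s ^ 2) :=
            mul_nonneg ht0.le (Real.sqrt_nonneg _)

/-- Monotonicity of F⁺(θ) = θ + arcsin(k sinθ/√(1-3sin²θ)) on (-θ_m, θ_m). -/
theorem stmt_10 (vc v : ℝ) (hvc : 0 < vc) (hv : 0 < v)
    (k : ℝ) (hk : k = vc / v)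
    (θm : ℝ) (hθm : θm = Real.arcsin (1 / Real.sqrt (3 + k ^ 2))) :
    StrictMonoOn
      (fun θ : ℝ => θ + Real.arcsin (k * Real.sin θ / Real.sqrt (1 - 3 * Real.sin θ ^ 2)))
      (Set.Ioo (-θm) θm) := by
  have hk0 : 0 < k := by rw [hk]; positivity
  have hK : (0:ℝ) < 3 + k ^ 2 := by positivity
  have hsqK : (1:ℝ) ≤ Real.sqrt (3 + k ^ 2) := by
    rw [show (1:ℝ) = Real.sqrt 1 by simp]
    exact Real.sqrt_le_sqrt (by nlinarith)
  have harg0 : (0:ℝ) ≤ 1 / Real.sqrt (3 + k ^ 2) := by positivity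
  have harg1 : 1 / Real.sqrt (3 + k ^ 2) ≤ 1 := by
    rw [div_le_one (by linarith)]; exact hsqK
  have hθm_le : θm ≤ Real.pi / 2 := hθm ▸ Real.arcsin_le_pi_div_two _
  have hθm_pos : 0 ≤ θm := hθm ▸ Real.arcsin_nonneg.2 harg0
  have hθm_ge : -(Real.pi / 2) ≤ -θm := by linarith
  have hsin_θm : Real.sin θm = 1 / Real.sqrt (3 + k ^ 2) := by
    rw [hθm, Real.sin_arcsin (by linarith) harg1]
  -- key bound on sin² for θ ∈ Ioo
  have hbound : ∀ θ ∈ Set.Ioo (-θm) θm, 3 * Real.sin θ ^ 2 < 1 := by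
    intro θ hθ
    have hmem : θ ∈ Set.Icc (-(Real.pi/2)) (Real.pi/2) :=
      ⟨le_trans hθm_ge hθ.1.le, le_trans hθ.2.le hθm_le⟩
    have hmemm : θm ∈ Set.Icc (-(Real.pi/2)) (Real.pi/2) := ⟨by linarith, hθm_le⟩
    have hmemn : -θm ∈ Set.Icc (-(Real.pi/2)) (Real.pi/2) := ⟨hθm_ge, by linarith⟩
    have h1 : Real.sin θ < Real.sin θm := Real.strictMonoOn_sin hmem hmemm hθ.2
    have h2 : Real.sin (-θm) < Real.sin θ := Real.strictMonoOn_sin hmemn hmem hθ.1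
    rw [Real.sin_neg] at h2
    have hsq : Real.sin θ ^ 2 < Real.sin θm ^ 2 := sq_lt_sq' h2 h1
    have : Real.sin θm ^ 2 = 1 / (3 + k ^ 2) := by
      rw [hsin_θm, div_pow, one_pow, Real.sq_sqrt hK.le]
    rw [this, lt_div_iff₀ hK] at hsq
    nlinarith [sq_nonneg (Real.sin θ), sq_nonneg k]
  -- sin monotone on interval
  intro a ha b hb hab
  have hmema : a ∈ Set.Icc (-(Real.pi/2)) (Real.pi/2) :=
    ⟨le_trans hθm_ge ha.1.le, le_trans ha.2.le hθm_le⟩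
  have hmemb : b ∈ Set.Icc (-(Real.pi/2)) (Real.pi/2) :=
    ⟨le_trans hθm_ge hb.1.le, le_trans hb.2.le hθm_le⟩
  have hsin : Real.sin a ≤ Real.sin b := (Real.strictMonoOn_sin hmema hmemb hab).le
  have hphi := phi_mono_aux (hbound a ha) (hbound b hb) hsin
  have harcsin : Real.arcsin (k * Real.sin a / Real.sqrt (1 - 3 * Real.sin a ^ 2)) ≤
      Real.arcsin (k * Real.sin b / Real.sqrt (1 - 3 * Real.sin b ^ 2)) := by
    apply Real.monotone_arcsin
    rw [mul_div_assoc, mul_div_assoc]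
    exact mul_le_mul_of_nonneg_left hphi hk0.le
  simp only
  linarith
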